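/- (Theorem 2, rounding step.) Let k ≥ 1, let a₁, …, a_k and C be nonzero integers with 0 < ε ≤ 1/(4 Σᵢ |aᵢ|), and suppose that no subset S ⊆ {1, …, k} satisfies Σ_{i∈S} aᵢ = C. If x₁, …, x_k ∈ ℝ each satisfy min(|xᵢ|, |xᵢ - 1|) ≤ 2ε, then (C - Σ_{i=1}^k aᵢ xᵢ)² ≥ 1/4. -/

import Mathlib

open BigOperators Finset

/-- Theorem 2, rounding step: if no subset `S ⊆ {1, …, k}` satisfies
`Σ_{i∈S} aᵢ = C`, and each `xᵢ` is within `2ε` of `0` or `1`, then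
`(C - Σᵢ aᵢ xᵢ)² ≥ 1/4`. -/
theorem rounding_step
    (k : ℕ) (hk : 1 ≤ k) (a : Fin k → ℤ) (C : ℤ)
    (ha : ∀ i, a i ≠ 0) (hC : C ≠ 0) (ε : ℝ)
    (hε : 0 < ε) (hε' : ε ≤ 1 / (4 * ∑ i, |(a i : ℝ)|))
    (hno : ¬ ∃ S : Finset (Fin k), ∑ i ∈ S, a i = C)
    (x : Fin k → ℝ) (hx : ∀ i, min |x i| |x i - 1| ≤ 2 * ε) :
    1 / 4 ≤ ((C : ℝ) - ∑ i, (a i : ℝ) * x i) ^ 2 := by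
  push_neg at hno
  set S : Finset (Fin k) := Finset.univ.filter (fun i => |x i - 1| ≤ |x i|) with hS
  set r : ℤ := ∑ i ∈ S, a i with hr
  -- sum of |a i| is positive
  have hsum_pos : 0 < ∑ i, |(a i : ℝ)| := by
    apply Finset.sum_pos'
    · intro i _; exact abs_nonneg _
    · refine ⟨⟨0, hk⟩, Finset.mem_univ _, ?_⟩
      have := ha ⟨0, hk⟩
      positivity
  -- |C - r| ≥ 1
  have h1 : (1 : ℝ) ≤ |(C : ℝ) - (r : ℝ)| := by
    have hne : C - r ≠ 0 := sub_ne_zero.mpr fun h => hno S h.symm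
    have h1' : (1 : ℤ) ≤ |C - r| := Int.one_le_abs hne
    have : (C : ℝ) - (r : ℝ) = ((C - r : ℤ) : ℝ) := by push_cast; ring
    rw [this, ← Int.cast_abs]
    exact_mod_cast h1'
  -- write r as a sum over univ
  have hr' : (r : ℝ) = ∑ i, (a i : ℝ) * (if i ∈ S then (1 : ℝ) else 0) := by
    rw [hr]
    push_cast
    simp only [mul_ite, mul_one, mul_zero]
    rw [Finset.sum_ite_mem, Finset.univ_inter]
  -- bound |r - Σ a x|
  have h2 : |(r : ℝ) - ∑ i, (a i : ℝ) * x i| ≤ 1 / 2 := by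
    rw [hr', ← Finset.sum_sub_distrib]
    have hterm : ∀ i ∈ Finset.univ, |(a i : ℝ) * (if i ∈ S then (1:ℝ) else 0) - (a i : ℝ) * x i| ≤ |(a i : ℝ)| * (2 * ε) := by
      intro i _
      rw [← mul_sub, abs_mul]
      apply mul_le_mul_of_nonneg_left _ (abs_nonneg _)
      by_cases hi : i ∈ S
      · simp only [hi, if_true]
        rw [abs_sub_comm]
        have : |x i - 1| ≤ |x i| := by simpa [hS] using hi
        have := hx i
        rw [min_eq_right ‹|x i - 1| ≤ |x i|›] at this
        linarith
      · simp only [hi, if_false]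
        have hlt : ¬ |x i - 1| ≤ |x i| := by simpa [hS] using hi
        have := hx i
        rw [min_eq_left (le_of_not_ge hlt)] at this
        simpa using (by linarith : |x i| ≤ 2 * ε)
    calc |∑ i, ((a i : ℝ) * (if i ∈ S then (1:ℝ) else 0) - (a i : ℝ) * x i)|
        ≤ ∑ i, |(a i : ℝ) * (if i ∈ S then (1:ℝ) else 0) - (a i : ℝ) * x i| :=
          Finset.abs_sum_le_sum_abs _ _
      _ ≤ ∑ i, |(a i : ℝ)| * (2 * ε) := Finset.sum_le_sum hterm
      _ = (∑ i, |(a i : ℝ)|) * (2 * ε) := by rw [← Finset.sum_mul]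
      _ ≤ (∑ i, |(a i : ℝ)|) * (2 * (1 / (4 * ∑ i, |(a i : ℝ)|))) := by
          apply mul_le_mul_of_nonneg_left _ (le_of_lt hsum_pos)
          linarith
      _ = 1 / 2 := by field_simp; ring
  have h3 : 1 / 2 ≤ |(C : ℝ) - ∑ i, (a i : ℝ) * x i| := by
    have := abs_sub_abs_le_abs_sub ((C : ℝ) - (r : ℝ)) ((C : ℝ) - ∑ i, (a i : ℝ) * x i)
    have heq : (C : ℝ) - (r : ℝ) - ((C : ℝ) - ∑ i, (a i : ℝ) * x i) = -((r:ℝ) - ∑ i, (a i : ℝ) * x i) := by ring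
    rw [heq, abs_neg] at this
    linarith
  calc (1 : ℝ) / 4 = (1/2) ^ 2 := by norm_num
    _ ≤ |(C : ℝ) - ∑ i, (a i : ℝ) * x i| ^ 2 := by
        apply pow_le_pow_left₀ (by norm_num) h3
    _ = ((C : ℝ) - ∑ i, (a i : ℝ) * x i) ^ 2 := sq_abs _
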